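/- arXiv:1601.01298 — 2 statements merged into one kernel-verified Lean document; each statement's English description precedes it below -/
import Mathlib

section
/- If G is a finite dismantlable graph with at least two vertices and u is a vertex dominated by another vertex v (with N[v] ⊇ N[u]), then G - u is dismantlable. -/
/-- The closed neighbourhood `N[v]` of a vertex. -/
def closedNbhd {V : Type*} (G : SimpleGraph V) (v : V) : Set V :=
  insert v {u | G.Adj v u}

/-- `v` dominates `u`: `N[v] ⊇ N[u]`. -/
def Dominates {V : Type*} (G : SimpleGraph V) (v u : V) : Prop :=
  closedNbhd G u ⊆ closedNbhd G v

/-- `v` dominates `u` in the subgraph induced on `S`. -/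
def DominatesOn {V : Type*} (G : SimpleGraph V) (S : Set V) (v u : V) : Prop :=
  ∀ w ∈ S, w ∈ closedNbhd G u → w ∈ closedNbhd G v

/-- A (finite) graph is dismantlable: its vertices can be ordered `v_1, …, v_n` so that
for each `i < n` some later `v_j` dominates `v_i` in the subgraph induced on
`{v_i, …, v_n}`. -/
def Dismantlable {V : Type*} (G : SimpleGraph V) : Prop :=
  ∃ (n : ℕ) (e : Fin n ≃ V), ∀ i : Fin n, (i : ℕ) + 1 < n →
    ∃ j : Fin n, i < j ∧
      DominatesOn G {w | ∃ k : Fin n, i ≤ k ∧ e k = w} (e j) (e i)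

/-- A full-information cop strategy: an initial vertex, and a move function taking the
current cop and robber positions to a new cop position, which must be the current one or
an adjacent one. -/
structure CopStrategy {V : Type*} (G : SimpleGraph V) where
  init : V
  move : V → V → V
  valid : ∀ c r, move c r = c ∨ G.Adj c (move c r)

/-- A full-information robber strategy: an initial vertex chosen knowing the cop's start,
and a move function taking the cop's (just updated) position and the robber's position to
a new robber position, which must be the current one or an adjacent one. -/
structure RobberStrategy {V : Type*} (G : SimpleGraph V) where
  init : V → V
  move : V → V → V
  valid : ∀ c r, move c r = r ∨ G.Adj r (move c r)

/-- The pair of (cop, robber) positions after `k` full rounds of play: the cop moves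
first in each round, then the robber responds. -/
def play {V : Type*} (G : SimpleGraph V) (cs : CopStrategy G) (rs : RobberStrategy G) :
    ℕ → V × V
  | 0 => (cs.init, rs.init cs.init)
  | k + 1 =>
      let p := play G cs rs k
      let c' := cs.move p.1 p.2
      (c', rs.move c' p.2)

/-- The cop wins: there is a cop strategy such that against every robber strategy, at some
round the cop's move lands on the robber's current vertex. -/
def CopWin {V : Type*} (G : SimpleGraph V) : Prop :=
  ∃ cs : CopStrategy G, ∀ rs : RobberStrategy G,
    ∃ k : ℕ, (play G cs rs (k + 1)).1 = (play G cs rs k).2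

section Aux

variable {V : Type*} (G : SimpleGraph V)

lemma mem_closedNbhd {w z : V} : w ∈ closedNbhd G z ↔ w = z ∨ G.Adj z w := by
  simp [closedNbhd]

lemma mem_closedNbhd_comm {w z : V} : w ∈ closedNbhd G z ↔ z ∈ closedNbhd G w := by
  rw [mem_closedNbhd, mem_closedNbhd, eq_comm, G.adj_comm]

/-- The "good elimination list" property. -/
def GoodL (l : List V) : Prop :=
  ∀ a x t, l = a ++ x :: t → t ≠ [] →
    ∃ y ∈ t, DominatesOn G (insert x {w | w ∈ t}) y x

variable {G}

lemma DominatesOn.mono {S T : Set V} {y x : V} (h : DominatesOn G T y x) (hST : S ⊆ T) :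
    DominatesOn G S y x := fun w hw => h w (hST hw)

lemma GoodL.head {x : V} {t : List V} (h : GoodL G (x :: t)) (ht : t ≠ []) :
    ∃ y ∈ t, DominatesOn G (insert x {w | w ∈ t}) y x :=
  h [] x t rfl ht

lemma GoodL.tail {x : V} {t : List V} (h : GoodL G (x :: t)) : GoodL G t := by
  intro a z t2 ha ht2
  exact h (x :: a) z t2 (by simp [ha]) ht2

lemma GoodL.cons {x : V} {t : List V}
    (h : GoodL G t)
    (hx : t ≠ [] → ∃ y ∈ t, DominatesOn G (insert x {w | w ∈ t}) y x) :
    GoodL G (x :: t) := by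
  intro a z t2 ha ht2
  rcases a with _ | ⟨a0, a'⟩
  · simp only [List.nil_append, List.cons.injEq] at ha
    rcases ha with ⟨rfl, rfl⟩
    exact hx ht2
  · simp only [List.cons_append, List.cons.injEq] at ha
    exact h a' z t2 ha.2 ht2

lemma GoodL.nil : GoodL G ([] : List V) := by
  intro a x t ha _
  exact absurd ha (by simp)

/-- Transport of `GoodL` along a closed-neighbourhood-preserving map. -/
lemma GoodL.map {σ : V → V} {l : List V}
    (hadj : ∀ w z, w ∈ l → z ∈ l → (w ∈ closedNbhd G z ↔ σ w ∈ closedNbhd G (σ z)))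
    (h : GoodL G l) : GoodL G (l.map σ) := by
  intro a x t ha ht
  rcases List.map_eq_append_iff.mp ha with ⟨a0, t0', hl, ha0, ht0'⟩
  rcases List.map_eq_cons_iff.mp ht0' with ⟨x0, t0, rfl, rfl, rfl⟩
  have ht0 : t0 ≠ [] := by rintro rfl; simp at ht
  obtain ⟨y, hy, hdom⟩ := h a0 x0 t0 hl ht0
  have hx0l : x0 ∈ l := by rw [hl]; simp
  have hyl : y ∈ l := by rw [hl]; simp [hy]
  refine ⟨σ y, List.mem_map_of_mem (f := σ) hy, ?_⟩
  intro w hw hwx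
  obtain ⟨w0, hw0mem, rfl⟩ : ∃ w0, (w0 = x0 ∨ w0 ∈ t0) ∧ σ w0 = w := by
    rcases hw with hw | hw
    · exact ⟨x0, Or.inl rfl, hw.symm⟩
    · rcases List.mem_map.mp hw with ⟨w0, hw0, rfl⟩
      exact ⟨w0, Or.inr hw0, rfl⟩
  have hw0l : w0 ∈ l := by
    rw [hl]
    rcases hw0mem with rfl | hh
    · simp
    · simp [hh]
  have h1 : w0 ∈ closedNbhd G x0 := (hadj w0 x0 hw0l hx0l).mpr hwx
  have hw0set : w0 ∈ insert x0 {z | z ∈ t0} := by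
    rcases hw0mem with rfl | hh
    · exact Set.mem_insert _ _
    · exact Set.mem_insert_iff.mpr (Or.inr hh)
  have h2 : w0 ∈ closedNbhd G y := hdom w0 hw0set h1
  exact (hadj w0 y hw0l hyl).mp h2

end Aux

section Main

variable {V : Type*} {G : SimpleGraph V}

/-- Main list lemma: delete a dominated vertex from a good list. -/
lemma main_list : ∀ l : List V, l.Nodup → GoodL G l → ∀ u v : V, u ∈ l → v ∈ l → v ≠ u →
    DominatesOn G {w | w ∈ l} v u →
    ∃ l' : List V, l'.Nodup ∧ (∀ x, x ∈ l' ↔ x ∈ l ∧ x ≠ u) ∧ GoodL G l' := by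
  classical
  intro l
  induction l with
  | nil => intro _ _ u v hu; simp at hu
  | cons x t ih =>
    intro hnd hg u v hu hv hvu hdom
    rcases List.nodup_cons.mp hnd with ⟨hxt, hndt⟩
    by_cases hxu : x = u
    · subst hxu
      refine ⟨t, hndt, ?_, hg.tail⟩
      intro z
      constructor
      · intro hz
        exact ⟨List.mem_cons_of_mem _ hz, fun h => hxt (h ▸ hz)⟩
      · rintro ⟨hz, hzx⟩
        rcases List.mem_cons.mp hz with rfl | hz
        · exact absurd rfl hzx
        · exact hz
    · -- x ≠ u, so u ∈ t and t ≠ []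
      have hut : u ∈ t := by
        rcases List.mem_cons.mp hu with rfl | h
        · exact absurd rfl hxu
        · exact h
      have ht : t ≠ [] := by rintro rfl; simp at hut
      obtain ⟨y, hyt, hydom⟩ := hg.head ht
      have hset : ({w | w ∈ x :: t} : Set V) = insert x {w | w ∈ t} := by
        ext w; simp [List.mem_cons]
      rw [hset] at hdom
      by_cases hvx : v = x
      · subst hvx
        -- head vertex is now called v; u is dominated by v on insert v {t}
        by_cases hyu : y = u
        · -- twin case
          subst hyu
          -- now the deleted vertex u is called y; v and y are twins on insert v {t}
          set σ : V → V := fun w => if w = y then v else w with hσ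
          have hσy : σ y = v := by simp [hσ]
          have hσne : ∀ w, w ≠ y → σ w = w := by intro w hw; simp [hσ, hw]
          have twin : ∀ w ∈ insert v {z | z ∈ t}, (w ∈ closedNbhd G v ↔ w ∈ closedNbhd G y) :=
            fun w hw => ⟨fun h => hydom w hw h, fun h => hdom w hw h⟩
          have hadj : ∀ w z, w ∈ t → z ∈ t →
              (w ∈ closedNbhd G z ↔ σ w ∈ closedNbhd G (σ z)) := by
            intro w z hw hz
            have hwm : w ∈ insert v {z | z ∈ t} := Set.mem_insert_iff.mpr (Or.inr hw)
            have hzm : z ∈ insert v {z' | z' ∈ t} := Set.mem_insert_iff.mpr (Or.inr hz)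
            by_cases hwy : w = y <;> by_cases hzy : z = y
            · subst hwy; subst hzy
              rw [hσy]
              simp [mem_closedNbhd]
            · subst hwy
              rw [hσy, hσne z hzy]
              rw [mem_closedNbhd_comm, mem_closedNbhd_comm (z := z)]
              exact (twin z hzm).symm
            · subst hzy
              rw [hσy, hσne w hwy]
              exact (twin w hwm).symm
            · rw [hσne w hwy, hσne z hzy]
          refine ⟨t.map σ, ?_, ?_, hg.tail.map hadj⟩
          · refine List.Nodup.map_on ?_ hndt
            intro a ha b hb hab
            by_cases hay : a = y <;> by_cases hby : b = y
            · rw [hay, hby]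
            · rw [hay] at hab ⊢
              rw [hσy, hσne b hby] at hab
              exact absurd (hab ▸ hb) hxt
            · rw [hby] at hab ⊢
              rw [hσy, hσne a hay] at hab
              exact absurd (hab.symm ▸ ha) hxt
            · rwa [hσne a hay, hσne b hby] at hab
          · intro z
            simp only [List.mem_map, List.mem_cons]
            constructor
            · rintro ⟨w, hw, rfl⟩
              by_cases hwy : w = y
              · subst hwy; rw [hσy]; exact ⟨Or.inl rfl, hxu⟩
              · rw [hσne w hwy]
                exact ⟨Or.inr hw, hwy⟩
            · rintro ⟨hz | hz, hzu⟩
              · subst hz; exact ⟨y, hut, hσy⟩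
              · exact ⟨z, hz, hσne z hzu⟩
        · -- y ≠ u : apply IH with dominator y for u inside t
          have hdomu : DominatesOn G {w | w ∈ t} y u := by
            intro w hw hwu
            have hw' : w ∈ insert v {z | z ∈ t} := Set.mem_insert_iff.mpr (Or.inr hw)
            exact hydom w hw' (hdom w hw' hwu)
          obtain ⟨t', hnd', hmem', hg'⟩ := ih hndt hg.tail u y hut hyt hyu hdomu
          refine ⟨v :: t', List.nodup_cons.mpr ⟨fun h => hxt ((hmem' v).mp h).1, hnd'⟩, ?_, ?_⟩
          · intro z
            simp only [List.mem_cons, hmem']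
            constructor
            · rintro (rfl | ⟨hz, hzu⟩)
              · exact ⟨Or.inl rfl, hxu⟩
              · exact ⟨Or.inr hz, hzu⟩
            · rintro ⟨rfl | hz, hzu⟩
              · exact Or.inl rfl
              · exact Or.inr ⟨hz, hzu⟩
          · refine hg'.cons (fun _ => ⟨y, (hmem' y).mpr ⟨hyt, hyu⟩, ?_⟩)
            refine hydom.mono ?_
            intro w hw
            rcases hw with rfl | hw
            · exact Set.mem_insert _ _
            · exact Set.mem_insert_iff.mpr (Or.inr ((hmem' w).mp hw).1)
      · -- v ≠ x, so v ∈ t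
        have hvt : v ∈ t := by
          rcases List.mem_cons.mp hv with rfl | h
          · exact absurd rfl hvx
          · exact h
        have hdomt : DominatesOn G {w | w ∈ t} v u :=
          hdom.mono (fun w hw => Set.mem_insert_iff.mpr (Or.inr hw))
        obtain ⟨t', hnd', hmem', hg'⟩ := ih hndt hg.tail u v hut hvt hvu hdomt
        refine ⟨x :: t', List.nodup_cons.mpr ⟨fun h => hxt ((hmem' x).mp h).1, hnd'⟩, ?_, ?_⟩
        · intro z
          simp only [List.mem_cons, hmem']
          constructor
          · rintro (rfl | ⟨hz, hzu⟩)
            · exact ⟨Or.inl rfl, hxu⟩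
            · exact ⟨Or.inr hz, hzu⟩
          · rintro ⟨rfl | hz, hzu⟩
            · exact Or.inl rfl
            · exact Or.inr ⟨hz, hzu⟩
        · by_cases hyu : y = u
          · subst hyu
            refine hg'.cons (fun _ => ⟨v, (hmem' v).mpr ⟨hvt, hvu⟩, ?_⟩)
            intro w hw hwx
            have hw' : w ∈ insert x {z | z ∈ t} := by
              rcases hw with rfl | hw
              · exact Set.mem_insert _ _
              · exact Set.mem_insert_iff.mpr (Or.inr ((hmem' w).mp hw).1)
            exact hdom w hw' (hydom w hw' hwx)
          · refine hg'.cons (fun _ => ⟨y, (hmem' y).mpr ⟨hyt, hyu⟩, ?_⟩)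
            refine hydom.mono ?_
            intro w hw
            rcases hw with rfl | hw
            · exact Set.mem_insert _ _
            · exact Set.mem_insert_iff.mpr (Or.inr ((hmem' w).mp hw).1)

end Main

section Bridge

variable {V : Type*} {G : SimpleGraph V}

lemma mem_drop_ofFn {n : ℕ} (e : Fin n → V) (m : ℕ) (w : V) :
    w ∈ (List.ofFn e).drop m ↔ ∃ k : Fin n, m ≤ (k : ℕ) ∧ e k = w := by
  constructor
  · intro hw
    obtain ⟨d, hd, hval⟩ := List.mem_iff_getElem.mp hw
    have hd' : m + d < n := by
      have := hd
      simp [List.length_drop] at this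
      omega
    refine ⟨⟨m + d, hd'⟩, by simp, ?_⟩
    rw [← hval, List.getElem_drop, List.getElem_ofFn]
  · rintro ⟨k, hmk, rfl⟩
    obtain ⟨d, hd⟩ : ∃ d, (k : ℕ) = m + d := ⟨(k : ℕ) - m, by omega⟩
    rw [List.mem_iff_getElem]
    have hk : (k : ℕ) < n := k.isLt
    have hdlen : d < ((List.ofFn e).drop m).length := by
      simp [List.length_drop]; omega
    refine ⟨d, hdlen, ?_⟩
    rw [List.getElem_drop, List.getElem_ofFn]
    congr 1
    apply Fin.ext
    simp [hd]

lemma exists_goodL (hd : Dismantlable G) :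
    ∃ l : List V, l.Nodup ∧ (∀ x, x ∈ l) ∧ GoodL G l := by
  obtain ⟨n, e, he⟩ := hd
  have hlen : (List.ofFn e).length = n := by simp
  refine ⟨List.ofFn e, List.nodup_ofFn.mpr e.injective, ?_, ?_⟩
  · intro x; rw [List.mem_ofFn]; exact ⟨e.symm x, e.apply_symm_apply x⟩
  · intro a x t ha ht
    have htlen : 0 < t.length := List.length_pos_iff.mpr ht
    have hlen2 : n = a.length + (t.length + 1) := by
      rw [← hlen, ha]; simp
    have hin : a.length < n := by omega
    have hi1 : a.length + 1 < n := by omega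
    have hxt : x :: t = (List.ofFn e).drop a.length := by
      rw [ha, List.drop_left]
    have hdc := List.drop_eq_getElem_cons (l := List.ofFn e) (i := a.length) (by omega)
    rw [← hxt] at hdc
    have hx : x = e ⟨a.length, hin⟩ := by
      have := (List.cons.injEq _ _ _ _).mp hdc
      rw [this.1, List.getElem_ofFn]
    have htd : t = (List.ofFn e).drop (a.length + 1) :=
      ((List.cons.injEq _ _ _ _).mp hdc).2
    have hmemt : ∀ w, w ∈ t ↔ ∃ k : Fin n, a.length + 1 ≤ (k : ℕ) ∧ e k = w := by
      intro w; rw [htd]; exact mem_drop_ofFn e (a.length + 1) w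
    obtain ⟨j, hij, hdom⟩ := he ⟨a.length, hin⟩ (by simpa using hi1)
    have hjt : e j ∈ t := (hmemt (e j)).mpr ⟨j, by
      have : a.length < (j : ℕ) := hij
      omega, rfl⟩
    refine ⟨e j, hjt, ?_⟩
    have hseteq : (insert x {w | w ∈ t} : Set V) =
        {w | ∃ k : Fin n, (⟨a.length, hin⟩ : Fin n) ≤ k ∧ e k = w} := by
      ext w
      simp only [Set.mem_insert_iff, Set.mem_setOf_eq]
      constructor
      · rintro (rfl | hw)
        · exact ⟨⟨a.length, hin⟩, le_refl _, hx.symm⟩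
        · obtain ⟨k, hk, rfl⟩ := (hmemt w).mp hw
          exact ⟨k, by simp [Fin.le_def]; omega, rfl⟩
      · rintro ⟨k, hk, rfl⟩
        rcases eq_or_lt_of_le hk with rfl | hlt
        · exact Or.inl hx.symm
        · refine Or.inr ((hmemt _).mpr ⟨k, ?_, rfl⟩)
          have : a.length < (k : ℕ) := hlt
          omega
    rw [hseteq]
    rw [hx]
    exact hdom

lemma dismantlable_induce_of_goodL {S : Set V} (l : List V) (hnd : l.Nodup)
    (hmem : ∀ x, x ∈ l ↔ x ∈ S) (hg : GoodL G l) : Dismantlable (G.induce S) := by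
  classical
  set l'' : List S := l.pmap (fun x hx => ⟨x, hx⟩) (fun x hx => (hmem x).mp hx) with hl''
  have hlen : l''.length = l.length := List.length_pmap
  have hval : ∀ (k : ℕ) (hk : k < l''.length),
      (l''[k] : V) = l[k]'(by omega) := by
    intro k hk
    simp [hl'']
  have hnd'' : l''.Nodup :=
    List.Nodup.pmap (fun a _ b _ h => congrArg Subtype.val h) hnd
  have hall : ∀ s : S, s ∈ l'' := by
    rintro ⟨x, hx⟩
    rw [hl'', List.mem_pmap]
    exact ⟨x, (hmem x).mpr hx, rfl⟩
  set e := List.Nodup.getEquivOfForallMemList l'' hnd'' hall with hedef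
  refine ⟨l''.length, e, ?_⟩
  intro i hi
  have hiN : (i : ℕ) + 1 < l.length := by omega
  have hiNl : (i : ℕ) < l.length := by omega
  have hsplit : l = l.take (i : ℕ) ++ l[(i : ℕ)] :: l.drop ((i : ℕ) + 1) := by
    conv_lhs => rw [← List.take_append_drop (i : ℕ) l]
    rw [List.drop_eq_getElem_cons hiNl]
  have htne : l.drop ((i : ℕ) + 1) ≠ [] := by
    rw [← List.length_pos_iff, List.length_drop]; omega
  obtain ⟨y, hyt, hdom⟩ := hg _ _ _ hsplit htne
  obtain ⟨jt, hjt, hjval⟩ := List.mem_iff_getElem.mp hyt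
  have hjtl : (i : ℕ) + 1 + jt < l.length := by
    rw [List.length_drop] at hjt; omega
  have hjN : (i : ℕ) + 1 + jt < l''.length := by omega
  have heval : ∀ (k : Fin l''.length), (e k : V) = l[(k : ℕ)]'(by omega) := by
    intro k
    exact hval k k.isLt
  have hyval : l[(i:ℕ) + 1 + jt]'hjtl = y := by
    rw [← hjval, List.getElem_drop]
  refine ⟨⟨(i : ℕ) + 1 + jt, hjN⟩, by
    rw [Fin.lt_def]; simp; omega, ?_⟩
  intro s hs hns
  obtain ⟨k, hik, hks⟩ := hs
  -- value of s
  have hsval : (s : V) = l[(k : ℕ)]'(by omega) := by rw [← hks]; exact heval k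
  -- s is in the ambient suffix set
  have hsmem : (s : V) ∈ insert (l[(i : ℕ)]'hiNl) {w | w ∈ l.drop ((i : ℕ) + 1)} := by
    rcases eq_or_lt_of_le hik with rfl | hlt
    · left; rw [hsval]
    · right
      simp only [Set.mem_setOf_eq]
      rw [List.mem_iff_getElem]
      have hik' : (i : ℕ) < (k : ℕ) := hlt
      obtain ⟨d, hd⟩ : ∃ d, (k : ℕ) = (i : ℕ) + 1 + d := ⟨(k : ℕ) - (i : ℕ) - 1, by omega⟩
      refine ⟨d, by rw [List.length_drop]; omega, ?_⟩
      rw [List.getElem_drop, hsval]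
      congr 1
      omega
  -- s ∈ N[e i] in the induced graph → value in ambient closed nbhd
  have hns' : (s : V) ∈ closedNbhd G (l[(i : ℕ)]'hiNl) := by
    rcases (mem_closedNbhd _).mp hns with heq | hadj
    · rw [mem_closedNbhd]
      left
      rw [heq, heval i]
    · rw [mem_closedNbhd]
      right
      have : G.Adj ((e i : S) : V) (s : V) := hadj
      rwa [heval i] at this
  have hsy : (s : V) ∈ closedNbhd G y := hdom (s : V) hsmem hns'
  rw [mem_closedNbhd]
  have hejval : ((e ⟨(i : ℕ) + 1 + jt, hjN⟩ : S) : V) = y := by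
    rw [heval ⟨(i : ℕ) + 1 + jt, hjN⟩]
    exact hyval
  rcases (mem_closedNbhd _).mp hsy with heq | hadj
  · left
    apply Subtype.ext
    rw [heq, hejval]
  · right
    have : G.Adj ((e ⟨(i : ℕ) + 1 + jt, hjN⟩ : S) : V) ((s : S) : V) := by
      rw [hejval]; exact hadj
    exact this

end Bridge

/-- removing a dominated vertex from a dismantlable graph (with at least two
vertices) leaves a dismantlable graph. -/
theorem dismantlable_remove_dominated {V : Type*} (G : SimpleGraph V)
    (hd : Dismantlable G) (hcard : 2 ≤ Nat.card V) (u v : V) (huv : v ≠ u)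
    (hdom : Dominates G v u) :
    Dismantlable (G.induce {w | w ≠ u}) := by
  obtain ⟨l, hnd, hall, hg⟩ := exists_goodL hd
  have hdomon : DominatesOn G {w | w ∈ l} v u := fun w _ hw => hdom hw
  obtain ⟨l', hnd', hmem', hg'⟩ := main_list l hnd hg u v (hall u) (hall v) huv hdomon
  refine dismantlable_induce_of_goodL l' hnd' ?_ hg'
  intro x
  rw [hmem' x]
  simp [hall x]
end

section
/- If a finite graph G is 2-dismantlable, then G is cop-win. -/
/-- A graph is 2-dismantlable if either it has fewer than 7 vertices and is cop-win, or
it has two distinct vertices `a`, `b`, each dominated by a vertex outside `{a, b}`, such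
that removing `a` and `b` leaves a 2-dismantlable graph. -/
inductive TwoDismantlable : {V : Type} → SimpleGraph V → Prop
  | small {V : Type} (G : SimpleGraph V) (hsmall : Nat.card V < 7) (hcw : CopWin G) :
      TwoDismantlable G
  | step {V : Type} (G : SimpleGraph V) (a b : V) (hab : a ≠ b)
      (ha : ∃ v : V, v ≠ a ∧ v ≠ b ∧ Dominates G v a)
      (hb : ∃ v : V, v ≠ a ∧ v ≠ b ∧ Dominates G v b)
      (hrec : TwoDismantlable (G.induce {w | w ≠ a ∧ w ≠ b})) :
      TwoDismantlable G

section Aux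

variable {V : Type*}

/-- The cop position sequence against a fixed robber trajectory. -/
def copSeq (G : SimpleGraph V) (cs : CopStrategy G) (t : ℕ → V) : ℕ → V
  | 0 => cs.init
  | k + 1 => cs.move (copSeq G cs t k) (t k)

/-- A cop strategy beats every valid robber trajectory. -/
def TrajWin (G : SimpleGraph V) (cs : CopStrategy G) : Prop :=
  ∀ t : ℕ → V, (∀ k, t (k + 1) = t k ∨ G.Adj (t k) (t (k + 1))) →
    ∃ k, copSeq G cs t (k + 1) = t k

open Classical in
theorem copWin_trajWin (G : SimpleGraph V) (h : CopWin G) :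
    ∃ cs : CopStrategy G, TrajWin G cs := by
  obtain ⟨cs, hcs⟩ := h
  refine ⟨cs, ?_⟩
  intro t ht
  by_contra hno
  push_neg at hno
  set c := copSeq G cs t with hc
  -- build a positional robber strategy replicating the trajectory up to looping
  have hmove : ∀ cp x, (∃ m, c (m + 1) = cp ∧ t m = x) → V := fun cp x h => t (h.choose + 1)
  let rs : RobberStrategy G :=
    { init := fun _ => t 0
      move := fun cp x => if h : ∃ m, c (m + 1) = cp ∧ t m = x then t (h.choose + 1) else x
      valid := by
        intro cp x
        by_cases h : ∃ m, c (m + 1) = cp ∧ t m = x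
        · simp only [dif_pos h]
          obtain ⟨h1, h2⟩ := h.choose_spec
          have h3 := ht h.choose
          rw [h2] at h3
          exact h3
        · simp only [dif_neg h]
          exact Or.inl trivial }
  have inv : ∀ k, ∃ m, play G cs rs k = (c m, t m) := by
    intro k
    induction k with
    | zero => exact ⟨0, rfl⟩
    | succ k ih =>
        obtain ⟨m, hm⟩ := ih
        have hcop : (play G cs rs (k + 1)).1 = c (m + 1) := by
          simp only [play, hm]; rfl
        have hex : ∃ m', c (m' + 1) = c (m + 1) ∧ t m' = t m := ⟨m, rfl, rfl⟩
        refine ⟨hex.choose + 1, ?_⟩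
        have hspec := hex.choose_spec
        have hrob : (play G cs rs (k + 1)).2 = t (hex.choose + 1) := by
          simp only [play, hm]
          show rs.move (cs.move (c m) (t m)) (t m) = t (hex.choose + 1)
          show (if h : ∃ m', c (m' + 1) = cs.move (c m) (t m) ∧ t m' = t m
              then t (h.choose + 1) else t m) = t (hex.choose + 1)
          have : cs.move (c m) (t m) = c (m + 1) := rfl
          rw [this, dif_pos hex]
        refine Prod.ext ?_ hrob
        rw [hcop, hspec.1]
  obtain ⟨k, hk⟩ := hcs rs
  obtain ⟨m, hm⟩ := inv k
  have h1 : (play G cs rs (k + 1)).1 = c (m + 1) := by simp only [play, hm]; rfl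
  rw [h1, hm] at hk
  exact hno m hk

/-- CopWin transports along graph isomorphisms. -/
theorem copWin_of_iso {W : Type*} {G : SimpleGraph V} {H : SimpleGraph W}
    (e : G ≃g H) (h : CopWin G) : CopWin H := by
  obtain ⟨cs, hcs⟩ := h
  let csH : CopStrategy H :=
    { init := e cs.init
      move := fun cp x => e (cs.move (e.symm cp) (e.symm x))
      valid := by
        intro cp x
        show e (cs.move (e.symm cp) (e.symm x)) = cp ∨
          H.Adj cp (e (cs.move (e.symm cp) (e.symm x)))
        rcases cs.valid (e.symm cp) (e.symm x) with h1 | h1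
        · left; rw [h1]; exact e.apply_symm_apply cp
        · right
          have h2 := e.map_adj_iff.mpr h1
          rwa [e.apply_symm_apply] at h2 }
  refine ⟨csH, ?_⟩
  intro rsH
  let rsG : RobberStrategy G :=
    { init := fun cp => e.symm (rsH.init (e cp))
      move := fun cp x => e.symm (rsH.move (e cp) (e x))
      valid := by
        intro cp x
        show e.symm (rsH.move (e cp) (e x)) = x ∨
          G.Adj x (e.symm (rsH.move (e cp) (e x)))
        rcases rsH.valid (e cp) (e x) with h1 | h1
        · left; rw [h1]; exact e.symm_apply_apply x
        · right
          have h2 := e.symm.map_adj_iff.mpr h1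
          rwa [e.symm_apply_apply] at h2 }
  obtain ⟨k, hk⟩ := hcs rsG
  have key : ∀ n, play H csH rsH n = (e (play G cs rsG n).1, e (play G cs rsG n).2) := by
    intro n
    induction n with
    | zero =>
        show (e cs.init, rsH.init (e cs.init)) = _
        simp only [play]
        show _ = (e cs.init, e (e.symm (rsH.init (e cs.init))))
        rw [e.apply_symm_apply]
    | succ n ih =>
        simp only [play, ih]
        simp only [csH, rsG, RelIso.symm_apply_apply, RelIso.apply_symm_apply]
  refine ⟨k, ?_⟩
  rw [key, key]
  simp only [Prod.fst, Prod.snd]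
  rw [hk]

theorem adj_closedNbhd {G : SimpleGraph V} {x y : V} (h : G.Adj x y) :
    y ∈ closedNbhd G x := Set.mem_insert_of_mem _ h

theorem mem_closedNbhd_self (G : SimpleGraph V) (x : V) : x ∈ closedNbhd G x :=
  Set.mem_insert _ _

/-- Retract lemma: if `v ≠ a` dominates `a` and `G - a` is cop-win, so is `G`. -/
theorem copWin_of_retract {G : SimpleGraph V} {a v : V} (hva : v ≠ a)
    (hdom : Dominates G v a) (hH : CopWin (G.induce {w | w ≠ a})) : CopWin G := by
  classical
  set S : Set V := {w | w ≠ a} with hS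
  set H := G.induce S with hHdef
  obtain ⟨cs', hcs'⟩ := copWin_trajWin H hH
  -- retraction
  let ρ : V → S := fun w => if h : w = a then ⟨v, hva⟩ else ⟨w, h⟩
  have ρ_val : ∀ w (h : w ≠ a), ρ w = ⟨w, h⟩ := by
    intro w h; simp only [ρ, dif_neg h]
  have ρ_a : ρ a = ⟨v, hva⟩ := by simp only [ρ, dif_pos rfl]
  have ρ_hom : ∀ x y : V, (y = x ∨ G.Adj x y) → (ρ y = ρ x ∨ H.Adj (ρ x) (ρ y)) := by
    intro x y hxy
    rcases hxy with rfl | hadj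
    · exact Or.inl rfl
    · by_cases hx : x = a
      · rw [hx] at hadj ⊢
        have hy : y ≠ a := fun hy => G.loopless.irrefl _ (hy ▸ hadj)
        have hyv : y ∈ closedNbhd G v := hdom (adj_closedNbhd hadj)
        rw [ρ_a, ρ_val y hy]
        rcases hyv with rfl | hvy
        · exact Or.inl rfl
        · exact Or.inr hvy
      · by_cases hy : y = a
        · rw [hy] at hadj ⊢
          have hxv : x ∈ closedNbhd G v := hdom (adj_closedNbhd hadj.symm)
          rw [ρ_a, ρ_val x hx]
          rcases hxv with rfl | hvx
          · exact Or.inl rfl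
          · exact Or.inr hvx.symm
        · rw [ρ_val x hx, ρ_val y hy]
          exact Or.inr hadj
  -- the cop strategy on G
  let cs : CopStrategy G :=
    { init := (cs'.init : V)
      move := fun cp rr =>
        if hc : cp = a then cp
        else if _ : cp = rr ∨ G.Adj cp rr then rr
        else (cs'.move ⟨cp, hc⟩ (ρ rr) : V)
      valid := by
        intro cp rr
        by_cases hc : cp = a
        · simp only [dif_pos hc]; exact Or.inl trivial
        · simp only [dif_neg hc]
          by_cases hcap : cp = rr ∨ G.Adj cp rr
          · simp only [dif_pos hcap]
            rcases hcap with rfl | hadj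
            · exact Or.inl rfl
            · exact Or.inr hadj
          · simp only [dif_neg hcap]
            rcases cs'.valid ⟨cp, hc⟩ (ρ rr) with h1 | h1
            · exact Or.inl (congrArg Subtype.val h1)
            · exact Or.inr h1 }
  refine ⟨cs, ?_⟩
  intro rs
  by_contra hno
  push_neg at hno
  let c : ℕ → V := fun k => (play G cs rs k).1
  let t : ℕ → V := fun k => (play G cs rs k).2
  have hno' : ∀ k, c (k + 1) ≠ t k := hno
  have hc0 : c 0 = (cs'.init : V) := rfl
  have hcs1 : ∀ k, c (k + 1) = cs.move (c k) (t k) := fun k => rfl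
  have hts1 : ∀ k, t (k + 1) = rs.move (c (k + 1)) (t k) := fun k => rfl
  have moveEq : ∀ (cp rr : V) (hc : cp ≠ a) (hcap : ¬(cp = rr ∨ G.Adj cp rr)),
      cs.move cp rr = (cs'.move ⟨cp, hc⟩ (ρ rr) : V) := by
    intro cp rr hc hcap
    show (if hc : cp = a then cp
        else if _ : cp = rr ∨ G.Adj cp rr then rr
        else (cs'.move ⟨cp, hc⟩ (ρ rr) : V)) = _
    rw [dif_neg hc, dif_neg hcap]
  have moveCap : ∀ (cp rr : V) (hc : cp ≠ a) (hcap : cp = rr ∨ G.Adj cp rr),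
      cs.move cp rr = rr := by
    intro cp rr hc hcap
    show (if hc : cp = a then cp
        else if _ : cp = rr ∨ G.Adj cp rr then rr
        else (cs'.move ⟨cp, hc⟩ (ρ rr) : V)) = rr
    rw [dif_neg hc, dif_pos hcap]
  -- the cop stays off `a`
  have hca : ∀ k, c k ≠ a := by
    intro k
    induction k with
    | zero => exact cs'.init.2
    | succ k ih =>
        by_cases hcap : c k = t k ∨ G.Adj (c k) (t k)
        · exact absurd ((hcs1 k).trans (moveCap _ _ ih hcap)) (hno' k)
        · rw [hcs1 k, moveEq _ _ ih hcap]
          exact (cs'.move ⟨c k, ih⟩ (ρ (t k))).2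
  -- the cop is never on nor adjacent to the robber
  have hnocap : ∀ k, ¬(c k = t k ∨ G.Adj (c k) (t k)) := by
    intro k hk
    exact hno' k ((hcs1 k).trans (moveCap _ _ (hca k) hk))
  -- the shadow trajectory
  let τ : ℕ → S := fun k => ρ (t k)
  have τvalid : ∀ k, τ (k + 1) = τ k ∨ H.Adj (τ k) (τ (k + 1)) := by
    intro k
    apply ρ_hom
    rw [hts1 k]
    exact rs.valid (c (k + 1)) (t k)
  have link : ∀ k, copSeq H cs' τ k = ⟨c k, hca k⟩ := by
    intro k
    induction k with
    | zero => exact Subtype.ext rfl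
    | succ k ih =>
        have : copSeq H cs' τ (k + 1) = cs'.move (copSeq H cs' τ k) (τ k) := rfl
        rw [this, ih]
        apply Subtype.ext
        exact ((hcs1 k).trans (moveEq _ _ (hca k) (hnocap k))).symm
  obtain ⟨k, hk⟩ := hcs' τ τvalid
  rw [link (k + 1)] at hk
  have hk' : c (k + 1) = ((ρ (t k) : S) : V) := congrArg Subtype.val hk
  by_cases hta : t k = a
  · rw [hta, ρ_a] at hk'
    -- cop is at v, robber at a; robber's next position is in N[a] ⊆ N[v]
    have htk1 : t (k + 1) ∈ closedNbhd G a := by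
      have h2 : t (k + 1) = t k ∨ G.Adj (t k) (t (k + 1)) := by
        rw [hts1 k]; exact rs.valid (c (k + 1)) (t k)
      rcases h2 with h1 | h1
      · rw [h1, hta]; exact mem_closedNbhd_self G a
      · rw [hta] at h1; exact adj_closedNbhd h1
    have htkv : t (k + 1) ∈ closedNbhd G v := hdom htk1
    apply hnocap (k + 1)
    rcases htkv with h1 | h1
    · exact Or.inl (by rw [hk', h1])
    · exact Or.inr (by rw [hk']; exact h1)
  · rw [ρ_val (t k) hta] at hk'
    exact hno' k hk'


/-- Domination descends to induced subgraphs. -/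
theorem dominates_induce {G : SimpleGraph V} {S : Set V} {v b : V}
    (hv : v ∈ S) (hb : b ∈ S) (h : Dominates G v b) :
    Dominates (G.induce S) ⟨v, hv⟩ ⟨b, hb⟩ := by
  intro u hu
  rcases hu with rfl | hadj
  · have : b ∈ closedNbhd G v := h (mem_closedNbhd_self G b)
    rcases this with rfl | hvb
    · exact Set.mem_insert _ _
    · exact Set.mem_insert_of_mem _ hvb
  · have hadj' : G.Adj b u.1 := hadj
    have : u.1 ∈ closedNbhd G v := h (adj_closedNbhd hadj')
    rcases this with h1 | h1
    · exact (Subtype.ext h1 : u = ⟨v, hv⟩) ▸ Set.mem_insert _ _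
    · exact Set.mem_insert_of_mem _ (h1 : G.Adj v u.1)

end Aux

theorem twoDismantlable_copWin_aux : ∀ {V : Type} (G : SimpleGraph V),
    TwoDismantlable G → CopWin G := by
  intro V G h
  induction h with
  | small G hsmall hcw => exact hcw
  | @step V G a b hab ha hb hrec ih =>
      obtain ⟨va, hva1, _, hda⟩ := ha
      obtain ⟨vb, hvb1, hvb2, hdb⟩ := hb
      have hbS : b ∈ {w | w ≠ a} := hab.symm
      have hvbS : vb ∈ {w | w ≠ a} := hvb1
      have h1 : CopWin (G.induce {w | w ≠ a}) := by
        apply copWin_of_retract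
          (a := (⟨b, hbS⟩ : {w | w ≠ a})) (v := (⟨vb, hvbS⟩ : {w | w ≠ a}))
          (fun hh => hvb2 (congrArg Subtype.val hh))
          (dominates_induce hvbS hbS hdb)
        -- transfer `ih` along an isomorphism of nested induced subgraphs
        let e : {w : V // w ∈ {w | w ≠ a ∧ w ≠ b}} ≃
            {x : {w : V // w ∈ {w | w ≠ a}} // x ∈ {w | w ≠ (⟨b, hbS⟩ : {w | w ≠ a})}} :=
          { toFun := fun w => ⟨⟨w.1, w.2.1⟩, fun hh => w.2.2 (congrArg Subtype.val hh)⟩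
            invFun := fun x => ⟨x.1.1, x.1.2, fun hh => x.2 (Subtype.ext hh)⟩
            left_inv := fun w => rfl
            right_inv := fun x => rfl }
        exact copWin_of_iso
          (⟨e, Iff.rfl⟩ : (G.induce {w | w ≠ a ∧ w ≠ b}) ≃g
            ((G.induce {w | w ≠ a}).induce {w | w ≠ (⟨b, hbS⟩ : {w | w ≠ a})})) ih
      exact copWin_of_retract hva1 hda h1

/-- every finite 2-dismantlable graph is cop-win. -/
theorem twoDismantlable_copWin {V : Type} [Finite V] (G : SimpleGraph V)
    (h : TwoDismantlable G) : CopWin G :=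
  twoDismantlable_copWin_aux G h
end
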